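/- Suppose the step sizes satisfy 0 < inf_k δ_k ≤ sup_k δ_k < 2. Then the sequence {X^k} produced by the SVT iteration X^k = D_τ(Y^{k−1}), Y^k = Y^{k−1} + δ_k P_Ω(M − X^k), started from Y⁰ = 0, converges to the unique solution of: minimize τ‖X‖_* + (1/2)‖X‖_F² subject to P_Ω(X) = P_Ω(M). -/

import Mathlib

open Matrix Filter Topology

noncomputable def frob {n₁ n₂ : ℕ} (X : Matrix (Fin n₁) (Fin n₂) ℝ) : ℝ :=
  Real.sqrt (∑ i, ∑ j, (X i j) ^ 2)

noncomputable def mInner {n₁ n₂ : ℕ} (X Y : Matrix (Fin n₁) (Fin n₂) ℝ) : ℝ :=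
  ∑ i, ∑ j, X i j * Y i j

noncomputable def singVal {n₁ n₂ : ℕ} (X : Matrix (Fin n₁) (Fin n₂) ℝ) (j : Fin n₂) : ℝ :=
  Real.sqrt ((Matrix.isHermitian_conjTranspose_mul_self X).eigenvalues j)

noncomputable def nuclearNorm {n₁ n₂ : ℕ} (X : Matrix (Fin n₁) (Fin n₂) ℝ) : ℝ :=
  ∑ j, singVal X j

noncomputable def specNorm {n₁ n₂ : ℕ} (X : Matrix (Fin n₁) (Fin n₂) ℝ) : ℝ :=
  ⨆ j, singVal X j

noncomputable def ftau {n₁ n₂ : ℕ} (τ : ℝ) (X : Matrix (Fin n₁) (Fin n₂) ℝ) : ℝ :=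
  τ * nuclearNorm X + (1 / 2) * frob X ^ 2

def projSet {n₁ n₂ : ℕ} (Ω : Finset (Fin n₁ × Fin n₂)) (X : Matrix (Fin n₁) (Fin n₂) ℝ) :
    Matrix (Fin n₁) (Fin n₂) ℝ :=
  Matrix.of fun i j => if (i, j) ∈ Ω then X i j else 0

def IsSubgradAt {n₁ n₂ : ℕ} (f : Matrix (Fin n₁) (Fin n₂) ℝ → ℝ)
    (Z X₀ : Matrix (Fin n₁) (Fin n₂) ℝ) : Prop :=
  ∀ X, f X₀ + mInner Z (X - X₀) ≤ f X

noncomputable def eNorm {m : ℕ} (v : Fin m → ℝ) : ℝ := Real.sqrt (∑ i, v i ^ 2)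

noncomputable def eInner {m : ℕ} (v w : Fin m → ℝ) : ℝ := ∑ i, v i * w i

section core
variable {n₁ n₂ : ℕ}

lemma euc_sum_apply {m n : ℕ} (v : Fin m → EuclideanSpace ℝ (Fin n)) (t : Fin n) :
    (∑ x, v x) t = ∑ x, v x t :=
  by rw [WithLp.ofLp_sum]; exact Finset.sum_apply t Finset.univ _

noncomputable def svW (X : Matrix (Fin n₁) (Fin n₂) ℝ) (j : Fin n₂) : Fin n₂ → ℝ :=
  ⇑((Matrix.isHermitian_conjTranspose_mul_self X).eigenvectorBasis j)

lemma svW_ortho (X : Matrix (Fin n₁) (Fin n₂) ℝ) (j k : Fin n₂) :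
    eInner (svW X j) (svW X k) = if j = k then 1 else 0 := by
  have h := (Matrix.isHermitian_conjTranspose_mul_self X).eigenvectorBasis.orthonormal
  rw [orthonormal_iff_ite] at h
  have := h j k
  simpa [PiLp.inner_apply, RCLike.inner_apply, eInner, svW, mul_comm] using this

lemma svW_eig (X : Matrix (Fin n₁) (Fin n₂) ℝ) (j : Fin n₂) :
    (Xᵀ * X) *ᵥ svW X j =
      ((Matrix.isHermitian_conjTranspose_mul_self X).eigenvalues j) • svW X j :=
  (Matrix.isHermitian_conjTranspose_mul_self X).mulVec_eigenvectorBasis j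

lemma svW_expand (X : Matrix (Fin n₁) (Fin n₂) ℝ) (b : Fin n₂ → ℝ) (t : Fin n₂) :
    b t = ∑ j, eInner (svW X j) b * svW X j t := by
  classical
  have h := (Matrix.isHermitian_conjTranspose_mul_self X).eigenvectorBasis.sum_repr'
    ((WithLp.equiv 2 (Fin n₂ → ℝ)).symm b)
  have h2 := congrFun (congrArg (fun (v : EuclideanSpace ℝ (Fin n₂)) => (v : Fin n₂ → ℝ)) h) t
  dsimp only at h2
  rw [euc_sum_apply] at h2
  simpa [PiLp.inner_apply, RCLike.inner_apply, eInner, svW, mul_comm, PiLp.smul_apply,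
    smul_eq_mul] using h2.symm

-- inner product transfer: ⟨X a, X b⟩ = ⟨a, (Xᵀ X) b⟩
lemma eInner_mulVec (X : Matrix (Fin n₁) (Fin n₂) ℝ) (a b : Fin n₂ → ℝ) :
    eInner (X *ᵥ a) (X *ᵥ b) = eInner a ((Xᵀ * X) *ᵥ b) := by
  show (X *ᵥ a) ⬝ᵥ (X *ᵥ b) = a ⬝ᵥ ((Xᵀ * X) *ᵥ b)
  rw [← Matrix.mulVec_mulVec, Matrix.dotProduct_mulVec a, Matrix.vecMul_transpose]
end core

section core2
variable {n₁ n₂ : ℕ}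

-- basic eInner algebra
lemma eInner_smul_right {n : ℕ} (c : ℝ) (v w : Fin n → ℝ) :
    eInner v (c • w) = c * eInner v w := by
  simp [eInner, Finset.mul_sum]; ring_nf
  exact Finset.sum_congr rfl fun i _ => by ring

lemma eInner_comm {n : ℕ} (v w : Fin n → ℝ) : eInner v w = eInner w v := by
  simp [eInner, mul_comm]

lemma eInner_self_nonneg {n : ℕ} (v : Fin n → ℝ) : 0 ≤ eInner v v :=
  Finset.sum_nonneg fun i _ => mul_self_nonneg _

lemma eInner_self_eq_zero {n : ℕ} {v : Fin n → ℝ} (h : eInner v v ≤ 0) : v = 0 := by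
  funext i
  have h0 : ∀ j ∈ Finset.univ, (0:ℝ) ≤ v j * v j := fun j _ => mul_self_nonneg _
  have hz : ∑ j, v j * v j = 0 := le_antisymm h (eInner_self_nonneg v)
  have := (Finset.sum_eq_zero_iff_of_nonneg h0).1 hz i (Finset.mem_univ i)
  simpa using mul_self_eq_zero.mp this

-- eigenvalue = squared singVal; nonneg
lemma singVal_nonneg (X : Matrix (Fin n₁) (Fin n₂) ℝ) (j : Fin n₂) : 0 ≤ singVal X j :=
  Real.sqrt_nonneg _

lemma eig_eq_inner (X : Matrix (Fin n₁) (Fin n₂) ℝ) (j : Fin n₂) :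
    (Matrix.isHermitian_conjTranspose_mul_self X).eigenvalues j
      = eInner (X *ᵥ svW X j) (X *ᵥ svW X j) := by
  rw [eInner_mulVec, svW_eig, eInner_smul_right]
  have := svW_ortho X j j
  simp at this
  rw [this, mul_one]

lemma eig_nonneg (X : Matrix (Fin n₁) (Fin n₂) ℝ) (j : Fin n₂) :
    0 ≤ (Matrix.isHermitian_conjTranspose_mul_self X).eigenvalues j := by
  rw [eig_eq_inner]; exact eInner_self_nonneg _

lemma singVal_sq (X : Matrix (Fin n₁) (Fin n₂) ℝ) (j : Fin n₂) :
    singVal X j ^ 2 = (Matrix.isHermitian_conjTranspose_mul_self X).eigenvalues j :=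
  Real.sq_sqrt (eig_nonneg X j)

-- left singular vectors
noncomputable def svU (X : Matrix (Fin n₁) (Fin n₂) ℝ) (j : Fin n₂) : Fin n₁ → ℝ :=
  if singVal X j = 0 then 0 else (singVal X j)⁻¹ • (X *ᵥ svW X j)

lemma Xw_inner (X : Matrix (Fin n₁) (Fin n₂) ℝ) (j k : Fin n₂) :
    eInner (X *ᵥ svW X j) (X *ᵥ svW X k)
      = (if j = k then singVal X k ^ 2 else 0) := by
  rw [eInner_mulVec, svW_eig, eInner_smul_right, svW_ortho, singVal_sq]
  split <;> ring

lemma Xw_eq_smul_svU (X : Matrix (Fin n₁) (Fin n₂) ℝ) (j : Fin n₂) :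
    X *ᵥ svW X j = singVal X j • svU X j := by
  by_cases h : singVal X j = 0
  · have h2 := Xw_inner X j j
    simp [h] at h2
    have := eInner_self_eq_zero (le_of_eq h2)
    simp [this, h]
  · rw [svU, if_neg h, smul_smul, mul_inv_cancel₀ h, one_smul]

lemma svU_inner (X : Matrix (Fin n₁) (Fin n₂) ℝ) (j k : Fin n₂) :
    eInner (svU X j) (svU X k)
      = if j = k then (if singVal X j = 0 then 0 else 1) else 0 := by
  by_cases hj : singVal X j = 0
  · simp [svU, hj, eInner]
  · by_cases hk : singVal X k = 0
    · rw [if_neg]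
      · simp [svU, hk, eInner]
      · rintro rfl; exact hj hk
    · rw [svU, if_neg hj, svU, if_neg hk, eInner_smul_right, eInner_comm, eInner_smul_right,
        eInner_comm, Xw_inner]
      by_cases h : j = k
      · subst h; simp only [if_pos rfl, if_neg hj, pow_two, ↓reduceIte]
        field_simp
      · simp [h]

end core2



section core3
variable {n₁ n₂ : ℕ}

lemma eInner_add_right {n : ℕ} (a v w : Fin n → ℝ) :
    eInner a (v + w) = eInner a v + eInner a w := by
  simp [eInner, mul_add, Finset.sum_add_distrib]

lemma eInner_sub_right {n : ℕ} (a v w : Fin n → ℝ) :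
    eInner a (v - w) = eInner a v - eInner a w := by
  simp [eInner, mul_sub, Finset.sum_sub_distrib]

lemma eInner_sum_right {n m : ℕ} (a : Fin n → ℝ) (f : Fin m → Fin n → ℝ) :
    eInner a (∑ j, f j) = ∑ j, eInner a (f j) := by
  simp only [eInner, Finset.sum_apply, Finset.mul_sum]
  exact Finset.sum_comm

lemma mulVec_expand (X : Matrix (Fin n₁) (Fin n₂) ℝ) (b : Fin n₂ → ℝ) :
    X *ᵥ b = ∑ j, (eInner (svW X j) b) • (X *ᵥ svW X j) := by
  funext i
  rw [Finset.sum_apply]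
  show ∑ t, X i t * b t = _
  calc ∑ t, X i t * b t
      = ∑ t, ∑ j, eInner (svW X j) b * (X i t * svW X j t) := by
        refine Finset.sum_congr rfl fun t _ => ?_
        rw [svW_expand X b t, Finset.mul_sum]
        exact Finset.sum_congr rfl fun j _ => by ring
    _ = ∑ j, eInner (svW X j) b * ∑ t, X i t * svW X j t := by
        rw [Finset.sum_comm]
        exact Finset.sum_congr rfl fun j _ => by rw [Finset.mul_sum]
    _ = _ := by
        refine Finset.sum_congr rfl fun j _ => ?_
        simp [Matrix.mulVec, dotProduct, smul_eq_mul]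

lemma inner_XmulVec (X : Matrix (Fin n₁) (Fin n₂) ℝ) (a : Fin n₁ → ℝ) (b : Fin n₂ → ℝ) :
    eInner a (X *ᵥ b)
      = ∑ j, singVal X j * (eInner a (svU X j) * eInner (svW X j) b) := by
  rw [mulVec_expand X b, eInner_sum_right]
  refine Finset.sum_congr rfl fun j _ => ?_
  rw [Xw_eq_smul_svU, smul_smul, eInner_smul_right]
  ring

lemma bessel {m n : ℕ} (p : Fin m → Fin n → ℝ)
    (hortho : ∀ j k, j ≠ k → eInner (p j) (p k) = 0)
    (hnorm : ∀ j, eInner (p j) (p j) ≤ 1) (v : Fin n → ℝ) :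
    ∑ k, (eInner (p k) v) ^ 2 ≤ eInner v v := by
  classical
  set c : Fin m → ℝ := fun k => eInner (p k) v with hc
  have e1 : ∀ w : Fin n → ℝ, eInner (∑ k, c k • p k) w = ∑ k, c k * eInner (p k) w := by
    intro w
    rw [eInner_comm, eInner_sum_right]
    exact Finset.sum_congr rfl fun k _ => by rw [eInner_smul_right, eInner_comm]
  have hkey : ∀ k, eInner (p k) (∑ l, c l • p l) = c k * eInner (p k) (p k) := by
    intro k
    rw [eInner_sum_right, Finset.sum_eq_single k]
    · rw [eInner_smul_right]
    · intro l _ hl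
      rw [eInner_smul_right, hortho k l (fun h => hl h.symm), mul_zero]
    · intro h; exact absurd (Finset.mem_univ k) h
  have hvS : eInner v (∑ k, c k • p k) = ∑ k, c k ^ 2 := by
    rw [eInner_sum_right]
    refine Finset.sum_congr rfl fun k _ => ?_
    rw [eInner_smul_right, eInner_comm v (p k)]
    ring
  have hSS : eInner (∑ k, c k • p k) (∑ l, c l • p l)
      = ∑ k, c k ^ 2 * eInner (p k) (p k) := by
    rw [e1]
    refine Finset.sum_congr rfl fun k _ => ?_
    rw [hkey]
    ring
  have hpos : 0 ≤ eInner (v - ∑ k, c k • p k) (v - ∑ l, c l • p l) :=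
    eInner_self_nonneg _
  rw [eInner_sub_right, eInner_comm (v - _) v, eInner_sub_right,
      eInner_comm (v - _) (∑ l, c l • p l), eInner_sub_right] at hpos
  rw [hvS, hSS, e1] at hpos
  have h3 : ∑ k, c k * eInner (p k) v = ∑ k, c k ^ 2 :=
    Finset.sum_congr rfl fun k _ => by rw [sq]
  rw [h3] at hpos
  have hle : ∑ k, c k ^ 2 * eInner (p k) (p k) ≤ ∑ k, c k ^ 2 := by
    refine Finset.sum_le_sum fun k _ => ?_
    have := hnorm k
    nlinarith [sq_nonneg (c k)]
  linarith

lemma nuclear_eq_sum (X : Matrix (Fin n₁) (Fin n₂) ℝ) :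
    ∑ j, eInner (svU X j) (X *ᵥ svW X j) = nuclearNorm X := by
  refine Finset.sum_congr rfl fun j _ => ?_
  rw [Xw_eq_smul_svU, eInner_smul_right]
  by_cases h : singVal X j = 0
  · simp [h]
  · have := svU_inner X j j
    rw [if_pos rfl, if_neg h] at this
    rw [this, mul_one]

lemma von_neumann {m : ℕ} (X : Matrix (Fin n₁) (Fin n₂) ℝ)
    (p : Fin m → Fin n₁ → ℝ) (q : Fin m → Fin n₂ → ℝ)
    (hpo : ∀ j k, j ≠ k → eInner (p j) (p k) = 0) (hpn : ∀ j, eInner (p j) (p j) ≤ 1)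
    (hqo : ∀ j k, j ≠ k → eInner (q j) (q k) = 0) (hqn : ∀ j, eInner (q j) (q j) ≤ 1) :
    ∑ k, eInner (p k) (X *ᵥ q k) ≤ nuclearNorm X := by
  classical
  have step1 : ∑ k, eInner (p k) (X *ᵥ q k)
      = ∑ j, singVal X j * ∑ k, eInner (p k) (svU X j) * eInner (svW X j) (q k) :=
    calc ∑ k, eInner (p k) (X *ᵥ q k)
        = ∑ k, ∑ j, singVal X j * (eInner (p k) (svU X j) * eInner (svW X j) (q k)) :=
          Finset.sum_congr rfl fun k _ => inner_XmulVec X (p k) (q k)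
      _ = ∑ j, ∑ k, singVal X j * (eInner (p k) (svU X j) * eInner (svW X j) (q k)) :=
          Finset.sum_comm
      _ = ∑ j, singVal X j * ∑ k, eInner (p k) (svU X j) * eInner (svW X j) (q k) :=
          Finset.sum_congr rfl fun j _ => by rw [Finset.mul_sum]
  rw [step1, nuclearNorm]
  refine Finset.sum_le_sum fun j _ => ?_
  have hA : ∑ k, (eInner (p k) (svU X j)) ^ 2 ≤ 1 := by
    refine le_trans (bessel p hpo hpn (svU X j)) ?_
    rw [svU_inner, if_pos rfl]
    split <;> norm_num
  have hB : ∑ k, (eInner (svW X j) (q k)) ^ 2 ≤ 1 := by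
    have := bessel q hqo hqn (svW X j)
    rw [svW_ortho, if_pos rfl] at this
    refine le_trans (le_of_eq ?_) this
    exact Finset.sum_congr rfl fun k _ => by rw [eInner_comm]
  have hcs := Finset.sum_mul_sq_le_sq_mul_sq Finset.univ
    (fun k => eInner (p k) (svU X j)) (fun k => eInner (svW X j) (q k))
  have hApos : (0:ℝ) ≤ ∑ k, (eInner (p k) (svU X j)) ^ 2 :=
    Finset.sum_nonneg fun k _ => sq_nonneg _
  have hBpos : (0:ℝ) ≤ ∑ k, (eInner (svW X j) (q k)) ^ 2 :=
    Finset.sum_nonneg fun k _ => sq_nonneg _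
  have hx : ∑ k, eInner (p k) (svU X j) * eInner (svW X j) (q k) ≤ 1 := by
    nlinarith
  calc singVal X j * ∑ k, eInner (p k) (svU X j) * eInner (svW X j) (q k)
      ≤ singVal X j * 1 := mul_le_mul_of_nonneg_left hx (singVal_nonneg X j)
    _ = singVal X j := mul_one _

lemma nuclear_convex (A B : Matrix (Fin n₁) (Fin n₂) ℝ) {t : ℝ} (h0 : 0 ≤ t) (h1 : t ≤ 1) :
    nuclearNorm ((1 - t) • A + t • B) ≤ (1 - t) * nuclearNorm A + t * nuclearNorm B := by
  classical
  set C := (1 - t) • A + t • B with hC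
  have hUo : ∀ j k, j ≠ k → eInner (svU C j) (svU C k) = 0 := fun j k h => by
    rw [svU_inner, if_neg h]
  have hUn : ∀ j, eInner (svU C j) (svU C j) ≤ 1 := fun j => by
    rw [svU_inner, if_pos rfl]; split <;> norm_num
  have hWo : ∀ j k, j ≠ k → eInner (svW C j) (svW C k) = 0 := fun j k h => by
    rw [svW_ortho, if_neg h]
  have hWn : ∀ j, eInner (svW C j) (svW C j) ≤ 1 := fun j => by
    rw [svW_ortho, if_pos rfl]
  have hsplit : ∀ j, eInner (svU C j) (C *ᵥ svW C j)
      = (1 - t) * eInner (svU C j) (A *ᵥ svW C j) + t * eInner (svU C j) (B *ᵥ svW C j) := by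
    intro j
    have : C *ᵥ svW C j = (1 - t) • (A *ᵥ svW C j) + t • (B *ᵥ svW C j) := by
      rw [hC, Matrix.add_mulVec, Matrix.smul_mulVec, Matrix.smul_mulVec]
    rw [this, eInner_add_right, eInner_smul_right, eInner_smul_right]
  have hAle : ∑ j, eInner (svU C j) (A *ᵥ svW C j) ≤ nuclearNorm A :=
    von_neumann A (svU C) (svW C) hUo hUn hWo hWn
  have hBle : ∑ j, eInner (svU C j) (B *ᵥ svW C j) ≤ nuclearNorm B :=
    von_neumann B (svU C) (svW C) hUo hUn hWo hWn
  have := nuclear_eq_sum C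
  calc nuclearNorm C = ∑ j, eInner (svU C j) (C *ᵥ svW C j) := this.symm
    _ = (1 - t) * ∑ j, eInner (svU C j) (A *ᵥ svW C j)
        + t * ∑ j, eInner (svU C j) (B *ᵥ svW C j) := by
          rw [Finset.mul_sum, Finset.mul_sum, ← Finset.sum_add_distrib]
          exact Finset.sum_congr rfl fun j _ => hsplit j
    _ ≤ (1 - t) * nuclearNorm A + t * nuclearNorm B := by
          have h1t : 0 ≤ 1 - t := by linarith
          have := mul_le_mul_of_nonneg_left hAle h1t
          have := mul_le_mul_of_nonneg_left hBle h0
          linarith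

end core3


section part3
variable {n₁ n₂ : ℕ}

lemma mInner_comm (A B : Matrix (Fin n₁) (Fin n₂) ℝ) : mInner A B = mInner B A := by
  simp [mInner, mul_comm]

lemma mInner_add_right (A B C : Matrix (Fin n₁) (Fin n₂) ℝ) :
    mInner A (B + C) = mInner A B + mInner A C := by
  simp [mInner, Matrix.add_apply, mul_add, Finset.sum_add_distrib]

lemma mInner_sub_right (A B C : Matrix (Fin n₁) (Fin n₂) ℝ) :
    mInner A (B - C) = mInner A B - mInner A C := by
  simp [mInner, Matrix.sub_apply, mul_sub, Finset.sum_sub_distrib]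

lemma mInner_smul_right (c : ℝ) (A B : Matrix (Fin n₁) (Fin n₂) ℝ) :
    mInner A (c • B) = c * mInner A B := by
  simp only [mInner, Matrix.smul_apply, smul_eq_mul, Finset.mul_sum]
  exact Finset.sum_congr rfl fun i _ => Finset.sum_congr rfl fun j _ => by ring

lemma mInner_add_left (A B C : Matrix (Fin n₁) (Fin n₂) ℝ) :
    mInner (A + B) C = mInner A C + mInner B C := by
  rw [mInner_comm, mInner_add_right, mInner_comm C A, mInner_comm C B]

lemma mInner_sub_left (A B C : Matrix (Fin n₁) (Fin n₂) ℝ) :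
    mInner (A - B) C = mInner A C - mInner B C := by
  rw [mInner_comm, mInner_sub_right, mInner_comm C A, mInner_comm C B]

lemma mInner_smul_left (c : ℝ) (A B : Matrix (Fin n₁) (Fin n₂) ℝ) :
    mInner (c • A) B = c * mInner A B := by
  rw [mInner_comm, mInner_smul_right, mInner_comm]

lemma mInner_self_nonneg (A : Matrix (Fin n₁) (Fin n₂) ℝ) : 0 ≤ mInner A A :=
  Finset.sum_nonneg fun i _ => Finset.sum_nonneg fun j _ => mul_self_nonneg _

lemma mInner_self_eq_zero {A : Matrix (Fin n₁) (Fin n₂) ℝ} (h : mInner A A ≤ 0) : A = 0 := by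
  ext i j
  have h0 : ∀ i' ∈ Finset.univ, (0:ℝ) ≤ ∑ j', A i' j' * A i' j' :=
    fun i' _ => Finset.sum_nonneg fun j' _ => mul_self_nonneg _
  have hz : ∑ i', ∑ j', A i' j' * A i' j' = 0 := le_antisymm h (mInner_self_nonneg A)
  have h1 := (Finset.sum_eq_zero_iff_of_nonneg h0).1 hz i (Finset.mem_univ i)
  have h2 := (Finset.sum_eq_zero_iff_of_nonneg
    (fun j' _ => mul_self_nonneg (A i j'))).1 h1 j (Finset.mem_univ j)
  simpa using mul_self_eq_zero.mp h2

lemma frob_sq (A : Matrix (Fin n₁) (Fin n₂) ℝ) : frob A ^ 2 = mInner A A := by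
  rw [frob, Real.sq_sqrt (by positivity)]
  exact Finset.sum_congr rfl fun i _ => Finset.sum_congr rfl fun j _ => sq (A i j) ▸ by ring

lemma mInner_sub_expand (P Q : Matrix (Fin n₁) (Fin n₂) ℝ) :
    mInner (P - Q) (P - Q) = mInner P P - 2 * mInner P Q + mInner Q Q := by
  rw [mInner_sub_left, mInner_sub_right, mInner_sub_right, mInner_comm Q P]
  ring

lemma mInner_comb_expand (a b : ℝ) (P Q : Matrix (Fin n₁) (Fin n₂) ℝ) :
    mInner (a • P + b • Q) (a • P + b • Q)
      = a^2 * mInner P P + 2*a*b*mInner P Q + b^2 * mInner Q Q := by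
  rw [mInner_add_left, mInner_add_right, mInner_add_right, mInner_smul_left, mInner_smul_left,
    mInner_smul_right, mInner_smul_right, mInner_smul_right, mInner_smul_right,
    mInner_smul_left, mInner_smul_left, mInner_comm Q P]
  ring

lemma strong_min {τ : ℝ} (hτ : 0 ≤ τ) (Y Xm : Matrix (Fin n₁) (Fin n₂) ℝ)
    (h : IsMinOn (fun Z => τ * nuclearNorm Z + (1 / 2) * frob (Z - Y) ^ 2) Set.univ Xm)
    (Z : Matrix (Fin n₁) (Fin n₂) ℝ) :
    τ * nuclearNorm Xm + (1/2) * mInner (Xm - Y) (Xm - Y) + (1/2) * mInner (Z - Xm) (Z - Xm)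
      ≤ τ * nuclearNorm Z + (1/2) * mInner (Z - Y) (Z - Y) := by
  set p := mInner (Xm - Y) (Xm - Y) with hp
  set q := mInner (Z - Y) (Z - Y) with hq
  set r := mInner (Xm - Y) (Z - Y) with hr
  set F := mInner (Z - Xm) (Z - Xm) with hFdef
  have hF : F = q - 2*r + p := by
    rw [hFdef, show Z - Xm = (Z - Y) - (Xm - Y) from (sub_sub_sub_cancel_right Z Xm Y).symm,
      mInner_sub_expand, mInner_comm (Z - Y) (Xm - Y)]
  have hFpos : 0 ≤ F := mInner_self_nonneg _
  have key : ∀ t : ℝ, 0 < t → t < 1 →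
      τ * nuclearNorm Xm + (1/2)*p + ((1-t)/2) * F ≤ τ * nuclearNorm Z + (1/2)*q := by
    intro t ht0 ht1
    set W := (1 - t) • Xm + t • Z with hW
    have hmin := isMinOn_iff.mp h W (Set.mem_univ W)
    simp only [frob_sq] at hmin
    have hWY : W - Y = (1 - t) • (Xm - Y) + t • (Z - Y) := by
      rw [hW]; ext i j
      simp [Matrix.add_apply, Matrix.sub_apply, Matrix.smul_apply, smul_eq_mul]
      ring
    have hquad : mInner (W - Y) (W - Y) = (1-t)^2 * p + 2*(1-t)*t*r + t^2 * q := by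
      rw [hWY, mInner_comb_expand]
    have hN : nuclearNorm W ≤ (1 - t) * nuclearNorm Xm + t * nuclearNorm Z :=
      nuclear_convex Xm Z (le_of_lt ht0) (le_of_lt ht1)
    have hNτ : τ * nuclearNorm W ≤ τ * ((1 - t) * nuclearNorm Xm + t * nuclearNorm Z) :=
      mul_le_mul_of_nonneg_left hN hτ
    rw [hquad] at hmin
    -- hmin : τ*N Xm + ½ p ≤ τ*N W + ½((1-t)²p + 2(1-t)t r + t² q)
    have hC : t * (τ * nuclearNorm Xm + (1/2)*p + ((1-t)/2) * (q - 2*r + p))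
        ≤ t * (τ * nuclearNorm Z + (1/2)*q) := by nlinarith [hmin, hNτ]
    have := le_of_mul_le_mul_left hC ht0
    rw [hF]
    linarith
  -- take t → 0
  by_contra hcon
  push_neg at hcon
  set L := τ * nuclearNorm Z + (1/2)*q - (τ * nuclearNorm Xm + (1/2)*p + (1/2)*F) with hL
  have hLneg : L < 0 := by rw [hL]; linarith
  set t0 := min (1/2 : ℝ) ((-L)/(F+1)) with ht0def
  have ht0pos : 0 < t0 := lt_min (by norm_num) (div_pos (by linarith) (by linarith))
  have ht0lt : t0 < 1 := lt_of_le_of_lt (min_le_left _ _) (by norm_num)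
  have hk := key t0 ht0pos ht0lt
  have h4 : t0 * (F + 1) ≤ -L := by
    rw [← le_div_iff₀ (by linarith : (0:ℝ) < F + 1)]
    exact min_le_right _ _
  have hkey2 : L ≥ -(t0/2) * F := by rw [hL]; linarith [hk]
  have hx : 0 ≤ t0 * F := mul_nonneg (le_of_lt ht0pos) hFpos
  have h5 : t0 * F ≤ -L - t0 := by nlinarith [h4]
  have h6 : L ≥ -(1/2) * (t0 * F) := by nlinarith [hkey2]
  clear_value t0 L F p q r
  linarith

end part3


section part4
variable {n₁ n₂ : ℕ}

lemma projSet_apply (Ω : Finset (Fin n₁ × Fin n₂)) (A : Matrix (Fin n₁) (Fin n₂) ℝ) (i j) :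
    projSet Ω A i j = if (i, j) ∈ Ω then A i j else 0 := rfl

lemma projSet_zero (Ω : Finset (Fin n₁ × Fin n₂)) :
    projSet Ω (0 : Matrix (Fin n₁) (Fin n₂) ℝ) = 0 := by
  ext i j; simp [projSet_apply]

lemma projSet_add (Ω : Finset (Fin n₁ × Fin n₂)) (A B : Matrix (Fin n₁) (Fin n₂) ℝ) :
    projSet Ω (A + B) = projSet Ω A + projSet Ω B := by
  ext i j; by_cases h : (i, j) ∈ Ω <;> simp [projSet_apply, h, Matrix.add_apply]

lemma projSet_sub (Ω : Finset (Fin n₁ × Fin n₂)) (A B : Matrix (Fin n₁) (Fin n₂) ℝ) :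
    projSet Ω (A - B) = projSet Ω A - projSet Ω B := by
  ext i j; by_cases h : (i, j) ∈ Ω <;> simp [projSet_apply, h, Matrix.sub_apply]

lemma projSet_smul (Ω : Finset (Fin n₁ × Fin n₂)) (c : ℝ) (A : Matrix (Fin n₁) (Fin n₂) ℝ) :
    projSet Ω (c • A) = c • projSet Ω A := by
  ext i j; by_cases h : (i, j) ∈ Ω <;> simp [projSet_apply, h, Matrix.smul_apply]

lemma projSet_idem (Ω : Finset (Fin n₁ × Fin n₂)) (A : Matrix (Fin n₁) (Fin n₂) ℝ) :
    projSet Ω (projSet Ω A) = projSet Ω A := by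
  ext i j; simp only [projSet_apply]; split <;> simp_all

lemma mInner_projSet_swap (Ω : Finset (Fin n₁ × Fin n₂)) (A B : Matrix (Fin n₁) (Fin n₂) ℝ) :
    mInner A (projSet Ω B) = mInner (projSet Ω A) B := by
  refine Finset.sum_congr rfl fun i _ => Finset.sum_congr rfl fun j _ => ?_
  simp only [projSet_apply]
  split <;> simp

lemma mInner_zero_right (A : Matrix (Fin n₁) (Fin n₂) ℝ) :
    mInner A (0 : Matrix (Fin n₁) (Fin n₂) ℝ) = 0 := by
  simp [mInner]

lemma projSet_inner_le (Ω : Finset (Fin n₁ × Fin n₂)) (A : Matrix (Fin n₁) (Fin n₂) ℝ) :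
    mInner (projSet Ω A) (projSet Ω A) ≤ mInner A A := by
  refine Finset.sum_le_sum fun i _ => Finset.sum_le_sum fun j _ => ?_
  simp only [projSet_apply]
  split
  · exact le_refl _
  · simpa using mul_self_nonneg (A i j)

lemma mInner_neg_left (A B : Matrix (Fin n₁) (Fin n₂) ℝ) :
    mInner (-A) B = -(mInner A B) := by
  simp [mInner, Matrix.neg_apply, neg_mul, Finset.sum_neg_distrib]

lemma mInner_neg_sub (A B : Matrix (Fin n₁) (Fin n₂) ℝ) :
    mInner (A - B) (A - B) = mInner (B - A) (B - A) := by
  rw [mInner_sub_expand, mInner_sub_expand, mInner_comm B A]; ring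

lemma mInner_add_smul_expand (d : ℝ) (P Q : Matrix (Fin n₁) (Fin n₂) ℝ) :
    mInner (P + d • Q) (P + d • Q)
      = mInner P P + 2*d*mInner P Q + d^2 * mInner Q Q := by
  have := mInner_comb_expand 1 d P Q
  simpa using this

lemma entry_sq_le (A : Matrix (Fin n₁) (Fin n₂) ℝ) (i : Fin n₁) (j : Fin n₂) :
    (A i j)^2 ≤ mInner A A := by
  have h1 : (A i j)^2 ≤ ∑ j', A i j' * A i j' := by
    rw [sq]
    exact Finset.single_le_sum (fun j' _ => mul_self_nonneg (A i j')) (Finset.mem_univ j)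
  refine le_trans h1 ?_
  exact Finset.single_le_sum
    (fun i' _ => Finset.sum_nonneg fun j' _ => mul_self_nonneg (A i' j')) (Finset.mem_univ i)

lemma quad_lower {a b d : ℝ} (ha : 0 < a) (hb : b < 2) (h1 : a ≤ d) (h2 : d ≤ b) :
    min (a*(2-a)) (b*(2-b)) ≤ d * (2 - d) := by
  by_contra hcon
  push_neg at hcon
  rw [lt_min_iff] at hcon
  obtain ⟨c1, c2⟩ := hcon
  rcases le_or_gt (a + d) 2 with h | h
  · nlinarith [mul_nonneg (sub_nonneg.2 h1) (by linarith : (0:ℝ) ≤ 2 - a - d)]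
  · have hbd : 2 < b + d := by linarith
    nlinarith [mul_nonneg (sub_nonneg.2 h2) (by linarith : (0:ℝ) ≤ d + b - 2)]

end part4

/-- If `0 < inf δ_k ≤ sup δ_k < 2`, the SVT iterates `X^k = D_τ(Y^{k-1})`,
`Y^k = Y^{k-1} + δ_k P_Ω(M - X^k)` (with `Y⁰ = 0`, and `X^{k}` characterized as the
prox minimizer) converge to the unique solution of:
minimize `τ‖X‖_* + (1/2)‖X‖_F²` subject to `P_Ω(X) = P_Ω(M)`. Existence of a primal-dual
optimal pair (saddle point of the Lagrangian) is assumed. -/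
theorem svt_convergence (n₁ n₂ : ℕ) (τ : ℝ) (hτ : 0 < τ)
    (Ω : Finset (Fin n₁ × Fin n₂)) (M : Matrix (Fin n₁) (Fin n₂) ℝ)
    (δ : ℕ → ℝ)
    (hδ : ∃ a b : ℝ, 0 < a ∧ b < 2 ∧ ∀ k, a ≤ δ k ∧ δ k ≤ b)
    (X Y : ℕ → Matrix (Fin n₁) (Fin n₂) ℝ)
    (hY0 : Y 0 = 0)
    (hX : ∀ k, IsMinOn (fun Z => τ * nuclearNorm Z + (1 / 2) * frob (Z - Y k) ^ 2)
        Set.univ (X (k + 1)))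
    (hY : ∀ k, Y (k + 1) = Y k + δ (k + 1) • projSet Ω (M - X (k + 1)))
    (hsaddle : ∃ (Xs Ys : Matrix (Fin n₁) (Fin n₂) ℝ),
      (∀ X', ftau τ Xs + mInner Ys (projSet Ω (M - Xs)) ≤
        ftau τ X' + mInner Ys (projSet Ω (M - X'))) ∧
      (∀ Y', ftau τ Xs + mInner Y' (projSet Ω (M - Xs)) ≤
        ftau τ Xs + mInner Ys (projSet Ω (M - Xs)))) :
    ∃ Xopt : Matrix (Fin n₁) (Fin n₂) ℝ,
      projSet Ω Xopt = projSet Ω M ∧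
      (∀ Z, projSet Ω Z = projSet Ω M → ftau τ Xopt ≤ ftau τ Z) ∧
      (∀ Z, projSet Ω Z = projSet Ω M → ftau τ Z = ftau τ Xopt → Z = Xopt) ∧
      Tendsto (fun k => X k) atTop (nhds Xopt) := by
  classical
  obtain ⟨a, b, ha, hb2, hab⟩ := hδ
  obtain ⟨Xs, Ys, hs1, hs2⟩ := hsaddle
  have hR : projSet Ω (M - Xs) = 0 := by
    have h := hs2 (Ys + projSet Ω (M - Xs))
    rw [mInner_add_left] at h
    exact mInner_self_eq_zero (by linarith)
  have hfeas : projSet Ω Xs = projSet Ω M := by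
    have h := hR
    rw [projSet_sub] at h
    exact (sub_eq_zero.mp h).symm
  have hminglob : ∀ X', ftau τ Xs ≤ ftau τ X' + mInner Ys (projSet Ω (M - X')) := by
    intro X'
    have h := hs1 X'
    rw [hR, mInner_zero_right] at h
    linarith
  have hminfeas : ∀ Z, projSet Ω Z = projSet Ω M → ftau τ Xs ≤ ftau τ Z := by
    intro Z hZ
    have h := hminglob Z
    rw [projSet_sub, ← hZ, sub_self, mInner_zero_right] at h
    linarith
  set Ps := projSet Ω Ys with hPs
  have hftau : ∀ W : Matrix (Fin n₁) (Fin n₂) ℝ,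
      ftau τ W = τ * nuclearNorm W + (1/2) * mInner W W := by
    intro W; rw [ftau, frob_sq]
  have hXsmin : IsMinOn (fun Z => τ * nuclearNorm Z + (1 / 2) * frob (Z - Ps) ^ 2)
      Set.univ Xs := by
    rw [isMinOn_iff]
    intro W _
    have h := hminglob W
    have hswap : mInner Ys (projSet Ω (M - W)) = mInner Ps M - mInner Ps W := by
      rw [mInner_projSet_swap, ← hPs, mInner_sub_right]
    have hMXs : mInner Ps M = mInner Ps Xs := by
      have h0 : mInner Ps (M - Xs) = 0 := by
        rw [hPs, ← mInner_projSet_swap, hR, mInner_zero_right]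
      rw [mInner_sub_right] at h0
      linarith
    rw [hswap, hMXs, hftau, hftau] at h
    simp only [frob_sq]
    rw [mInner_sub_expand, mInner_sub_expand, mInner_comm Xs Ps, mInner_comm W Ps]
    linarith
  have hPsZXs : ∀ (W : Matrix (Fin n₁) (Fin n₂) ℝ), projSet Ω W = projSet Ω M →
      mInner Ps W = mInner Ps Xs := by
    intro W hW
    have h0 : mInner Ps (W - Xs) = 0 := by
      rw [hPs, ← mInner_projSet_swap, projSet_sub, hW, ← hfeas, sub_self, mInner_zero_right]
    rw [mInner_sub_right] at h0
    linarith
  have huniq : ∀ Z, projSet Ω Z = projSet Ω M → ftau τ Z = ftau τ Xs → Z = Xs := by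
    intro Z hZ hE
    have hsm := strong_min (le_of_lt hτ) Ps Xs hXsmin Z
    have h0 := hPsZXs Z hZ
    have heq : τ * nuclearNorm Z + (1/2) * mInner Z Z
        = τ * nuclearNorm Xs + (1/2) * mInner Xs Xs := by
      rw [← hftau, ← hftau, hE]
    rw [mInner_sub_expand Xs Ps, mInner_sub_expand Z Ps, mInner_comm Xs Ps,
      mInner_comm Z Ps] at hsm
    have hZXs : mInner (Z - Xs) (Z - Xs) ≤ 0 := by linarith
    have := mInner_self_eq_zero hZXs
    exact sub_eq_zero.mp this
  have hfirm : ∀ k, mInner (X (k+1) - Xs) (X (k+1) - Xs)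
      ≤ mInner (X (k+1) - Xs) (Y k - Ps) := by
    intro k
    have s1 := strong_min (le_of_lt hτ) (Y k) (X (k+1)) (hX k) Xs
    have s2 := strong_min (le_of_lt hτ) Ps Xs hXsmin (X (k+1))
    simp only [mInner_sub_expand] at s1 s2
    rw [mInner_comm Xs (X (k+1))] at s1
    rw [mInner_sub_expand, mInner_sub_left, mInner_sub_right, mInner_sub_right]
    linarith
  have hsupp : ∀ k, projSet Ω (Y k) = Y k := by
    intro k
    induction k with
    | zero => rw [hY0, projSet_zero]
    | succ n ih => rw [hY n, projSet_add, ih, projSet_smul, projSet_idem]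
  set D : ℕ → ℝ := fun k => mInner (X (k+1) - Xs) (X (k+1) - Xs) with hD
  set E : ℕ → ℝ := fun k => mInner (Y k - Ps) (Y k - Ps) with hE
  set c : ℝ := min (a*(2-a)) (b*(2-b)) with hc
  have hab0 := hab 0
  have haleb : a ≤ b := le_trans hab0.1 hab0.2
  have hcpos : 0 < c :=
    lt_min (mul_pos ha (by linarith)) (mul_pos (by linarith) (by linarith))
  have hDpos : ∀ k, 0 ≤ D k := fun k => mInner_self_nonneg _
  have hEpos : ∀ k, 0 ≤ E k := fun k => mInner_self_nonneg _
  have hstep : ∀ k, E (k+1) + c * D k ≤ E k := by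
    intro k
    have hd := hab (k+1)
    have hδpos : (0:ℝ) < δ (k+1) := lt_of_lt_of_le ha hd.1
    have hq := quad_lower ha hb2 hd.1 hd.2
    rw [← hc] at hq
    have hproj : projSet Ω (M - X (k+1)) = projSet Ω (Xs - X (k+1)) := by
      rw [show M - X (k+1) = (M - Xs) + (Xs - X (k+1)) from
        (sub_add_sub_cancel M Xs (X (k+1))).symm, projSet_add, hR, zero_add]
    have hYd : Y (k+1) - Ps = (Y k - Ps) + δ (k+1) • projSet Ω (Xs - X (k+1)) := by
      rw [hY k, hproj]
      abel
    have hE1 : E (k+1) = E k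
        + 2*(δ (k+1))*mInner (Y k - Ps) (projSet Ω (Xs - X (k+1)))
        + (δ (k+1))^2 * mInner (projSet Ω (Xs - X (k+1))) (projSet Ω (Xs - X (k+1))) := by
      show mInner (Y (k+1) - Ps) (Y (k+1) - Ps) = _
      rw [hYd, mInner_add_smul_expand]
    have hsup2 : projSet Ω (Y k - Ps) = Y k - Ps := by
      rw [projSet_sub, hsupp k, hPs, projSet_idem]
    have hcross : mInner (Y k - Ps) (projSet Ω (Xs - X (k+1))) ≤ -(D k) := by
      rw [mInner_projSet_swap, hsup2]
      have h2 := hfirm k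
      have e1 : mInner (Y k - Ps) (Xs - X (k+1)) = - mInner (X (k+1) - Xs) (Y k - Ps) := by
        rw [mInner_comm, show Xs - X (k+1) = -(X (k+1) - Xs) from (neg_sub _ _).symm,
          mInner_neg_left]
      rw [e1]
      have hDk : D k = mInner (X (k+1) - Xs) (X (k+1) - Xs) := rfl
      linarith
    have hRQ : mInner (projSet Ω (Xs - X (k+1))) (projSet Ω (Xs - X (k+1))) ≤ D k := by
      refine le_trans (projSet_inner_le _ _) ?_
      rw [mInner_neg_sub]
    have m1 : 2*(δ (k+1))*mInner (Y k - Ps) (projSet Ω (Xs - X (k+1)))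
        ≤ 2*(δ (k+1)) * (-(D k)) :=
      mul_le_mul_of_nonneg_left hcross (by linarith)
    have m2 : (δ (k+1))^2 * mInner (projSet Ω (Xs - X (k+1))) (projSet Ω (Xs - X (k+1)))
        ≤ (δ (k+1))^2 * D k :=
      mul_le_mul_of_nonneg_left hRQ (sq_nonneg _)
    have m3 : c * D k ≤ (δ (k+1) * (2 - δ (k+1))) * D k :=
      mul_le_mul_of_nonneg_right hq (hDpos k)
    nlinarith [hE1, m1, m2, m3]
  have hsum : ∀ K, (∑ k ∈ Finset.range K, c * D k) + E K ≤ E 0 := by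
    intro K
    induction K with
    | zero => simp
    | succ n ih =>
      rw [Finset.sum_range_succ]
      have := hstep n
      linarith
  have hsum' : ∀ K, ∑ k ∈ Finset.range K, c * D k ≤ E 0 := by
    intro K
    have := hsum K
    have h0 := hEpos K
    linarith
  have hsummable : Summable (fun k => c * D k) :=
    summable_of_sum_range_le (fun n => mul_nonneg hcpos.le (hDpos n)) hsum'
  have hto : Tendsto (fun k => c * D k) atTop (nhds 0) := hsummable.tendsto_atTop_zero
  have hDto : Tendsto D atTop (nhds 0) := by
    have h2 := hto.const_mul (c⁻¹)
    simp only [mul_zero] at h2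
    have h3 : (fun k => c⁻¹ * (c * D k)) = D := by
      funext k
      rw [inv_mul_cancel_left₀ (ne_of_gt hcpos)]
    rwa [h3] at h2
  have hXto : Tendsto (fun k => X (k+1)) atTop (nhds Xs) := by
    refine tendsto_pi_nhds.mpr ?_
    intro i
    rw [tendsto_pi_nhds]
    intro j
    have hbnd : ∀ k, |X (k+1) i j - Xs i j| ≤ Real.sqrt (D k) := by
      intro k
      rw [← Real.sqrt_sq_eq_abs]
      apply Real.sqrt_le_sqrt
      have := entry_sq_le (X (k+1) - Xs) i j
      simpa [Matrix.sub_apply] using this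
    have hsq : Tendsto (fun k => Real.sqrt (D k)) atTop (nhds 0) := by
      have h2 := (Real.continuous_sqrt.tendsto 0).comp hDto
      simpa [Function.comp_def] using h2
    have hdiff : Tendsto (fun k => X (k+1) i j - Xs i j) atTop (nhds 0) :=
      squeeze_zero_norm hbnd hsq
    have h4 := hdiff.add_const (Xs i j)
    simpa using h4
  have hXfull : Tendsto X atTop (nhds Xs) :=
    (Filter.tendsto_add_atTop_iff_nat 1).mp hXto
  exact ⟨Xs, hfeas, hminfeas, huniq, hXfull⟩
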